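/- Let ζ > 2/3 and let q_i, q_j, q_k be probability vectors in R^K with q_i^T q_j ≥ ζ and q_i^T q_k ≥ ζ. Then there exists an index η that simultaneously attains the maxima of q_i, q_j, and q_k (all three belong to the same cluster). -/
import Mathlib

lemma stmt9_aux (K : ℕ) (qi qj : Fin K → ℝ) (ζ : ℝ) (hζ : 2/3 < ζ)
    (hi0 : ∀ l, 0 ≤ qi l) (hj0 : ∀ l, 0 ≤ qj l)
    (hi1 : ∑ l, qi l = 1) (hj1 : ∑ l, qj l = 1)
    (hij : ζ ≤ ∑ l, qi l * qj l)
    (η : Fin K) (hη : ∀ l, qi l ≤ qi η) : ∀ l, qj l ≤ qj η := by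
  have hj_le_one : ∀ l, qj l ≤ 1 := by
    intro l
    rw [← hj1]
    exact Finset.single_le_sum (fun m _ => hj0 m) (Finset.mem_univ l)
  -- ζ ≤ qi η
  have ha : ζ ≤ qi η := by
    calc ζ ≤ ∑ l, qi l * qj l := hij
      _ ≤ ∑ l, qi η * qj l := by
          apply Finset.sum_le_sum
          intro l _
          exact mul_le_mul_of_nonneg_right (hη l) (hj0 l)
      _ = qi η := by rw [← Finset.mul_sum, hj1, mul_one]
  -- key bound: ζ ≤ qi η * qj η + (1 - qi η)
  have hkey : ζ ≤ qi η * qj η + (1 - qi η) := by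
    have hsplit : ∑ l, qi l * qj l
        = qi η * qj η + ∑ l ∈ Finset.univ.erase η, qi l * qj l := by
      rw [add_comm, Finset.sum_erase_add _ _ (Finset.mem_univ η)]
    have hrest : ∑ l ∈ Finset.univ.erase η, qi l * qj l
        ≤ ∑ l ∈ Finset.univ.erase η, qi l := by
      apply Finset.sum_le_sum
      intro l _
      nlinarith [hi0 l, hj0 l, hj_le_one l]
    have hrest1 : ∑ l ∈ Finset.univ.erase η, qi l = 1 - qi η := by
      have := Finset.sum_erase_add Finset.univ qi (Finset.mem_univ η)
      rw [hi1] at this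
      linarith
    calc ζ ≤ ∑ l, qi l * qj l := hij
      _ = qi η * qj η + ∑ l ∈ Finset.univ.erase η, qi l * qj l := hsplit
      _ ≤ qi η * qj η + (1 - qi η) := by rw [← hrest1]; linarith
  have haη : (2:ℝ)/3 < qi η := lt_of_lt_of_le hζ ha
  have hbig : (1:ℝ)/2 < qj η := by nlinarith [hj_le_one η, hj0 η]
  intro l
  by_cases hl : l = η
  · rw [hl]
  · have hpair : qj l + qj η ≤ ∑ m, qj m := by
      have hsub : ({l, η} : Finset (Fin K)) ⊆ Finset.univ := Finset.subset_univ _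
      have := Finset.sum_le_sum_of_subset_of_nonneg hsub
        (fun m _ _ => hj0 m)
      rwa [Finset.sum_pair hl] at this
    rw [hj1] at hpair
    linarith

theorem stmt9 (K : ℕ) (qi qj qk : Fin K → ℝ) (ζ : ℝ) (hζ : 2/3 < ζ)
    (hi0 : ∀ l, 0 ≤ qi l) (hj0 : ∀ l, 0 ≤ qj l) (hk0 : ∀ l, 0 ≤ qk l)
    (hi1 : ∑ l, qi l = 1) (hj1 : ∑ l, qj l = 1) (hk1 : ∑ l, qk l = 1)
    (hij : ζ ≤ ∑ l, qi l * qj l) (hik : ζ ≤ ∑ l, qi l * qk l) :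
    ∃ η : Fin K, (∀ l, qi l ≤ qi η) ∧ (∀ l, qj l ≤ qj η) ∧ (∀ l, qk l ≤ qk η) := by
  have hK : (Finset.univ : Finset (Fin K)).Nonempty := by
    by_contra h
    rw [Finset.not_nonempty_iff_eq_empty] at h
    rw [h, Finset.sum_empty] at hi1
    norm_num at hi1
  obtain ⟨η, -, hη⟩ := Finset.exists_max_image Finset.univ qi hK
  refine ⟨η, fun l => hη l (Finset.mem_univ l), ?_, ?_⟩
  · exact stmt9_aux K qi qj ζ hζ hi0 hj0 hi1 hj1 hij η
      (fun l => hη l (Finset.mem_univ l))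
  · exact stmt9_aux K qi qk ζ hζ hi0 hk0 hi1 hk1 hik η
      (fun l => hη l (Finset.mem_univ l))
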